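/- Let f : ℝ^d → ℝ be L-smooth convex with minimizer x⋆, with coordinates partitioned into n blocks via orthogonal projections U_1, …, U_n summing to the identity. Consider randomized block-coordinate descent x_{k+1} = x_k - δ_k U_{i_k} f'(x_k) with i_k uniform on {1,…,n} and 0 ≤ δ_k ≤ 1/L. Then for any d_k ≥ 1, with d_{k+1} = d_k + δ_k L/n, the potential φ_k = d_k (f(x_k) - f⋆) + (L/2)‖x_k - x⋆‖² satisfies E_{i_k} φ_{k+1} ≤ φ_k. -/

import Mathlib

open Set

variable {E : Type*} [NormedAddCommGroup E] [InnerProductSpace ℝ E] [CompleteSpace E]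

local notation "⟪" x ", " y "⟫" => @inner ℝ _ _ x y

lemma line_hasDerivAt (f : E → ℝ) (f' : E → E) (hgrad : ∀ x, HasGradientAt f (f' x) x)
    (x v : E) (t : ℝ) :
    HasDerivAt (fun s : ℝ => f (x + s • v)) ⟪f' (x + t • v), v⟫ t := by
  have h1 : HasDerivAt (fun s : ℝ => x + s • v) v t := by
    simpa using ((hasDerivAt_id t).smul_const v).const_add x
  have h2 := (hgrad (x + t • v)).hasFDerivAt.comp_hasDerivAt t h1
  simpa [InnerProductSpace.toDual_apply_apply, Function.comp_def] using h2

/-- Gradient inequality for convex functions. -/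
lemma grad_le_sub (f : E → ℝ) (f' : E → E) (hgrad : ∀ x, HasGradientAt f (f' x) x)
    (hconv : ConvexOn ℝ Set.univ f) (x y : E) :
    ⟪f' x, y - x⟫ ≤ f y - f x := by
  set g : ℝ → ℝ := fun s => f (x + s • (y - x)) with hg
  have hgc : ConvexOn ℝ Set.univ g := by
    have := hconv.comp_affineMap
      (AffineMap.const ℝ ℝ x + (LinearMap.toAffineMap (LinearMap.smulRight
        (LinearMap.id : ℝ →ₗ[ℝ] ℝ) (y - x))))
    simpa [Function.comp_def, Function.const, Pi.add_def] using this
  have hd : HasDerivAt g ⟪f' x, y - x⟫ 0 := by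
    simpa using line_hasDerivAt f f' hgrad x (y - x) 0
  have := hgc.le_slope_of_hasDerivAt (Set.mem_univ (0:ℝ)) (Set.mem_univ (1:ℝ))
    one_pos hd
  simpa [slope_def_field, g] using this

/-- Descent lemma for L-smooth functions. -/
lemma descent_lemma (f : E → ℝ) (f' : E → E) (hgrad : ∀ x, HasGradientAt f (f' x) x)
    (L : ℝ) (hsmooth : ∀ x y, ‖f' x - f' y‖ ≤ L * ‖x - y‖) (x y : E) :
    f y ≤ f x + ⟪f' x, y - x⟫ + L / 2 * ‖y - x‖ ^ 2 := by
  set v := y - x with hv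
  set h : ℝ → ℝ := fun t => f (x + t • v) - t * ⟪f' x, v⟫ - L / 2 * t ^ 2 * ‖v‖ ^ 2 with hh
  set h' : ℝ → ℝ := fun t => ⟪f' (x + t • v), v⟫ - ⟪f' x, v⟫ - L * t * ‖v‖ ^ 2 with hh'
  have hd : ∀ t, HasDerivAt h (h' t) t := by
    intro t
    have d1 := line_hasDerivAt f f' hgrad x v t
    have d2 : HasDerivAt (fun t : ℝ => t * ⟪f' x, v⟫) ⟪f' x, v⟫ t := by
      simpa using (hasDerivAt_id t).mul_const ⟪f' x, v⟫
    have d3 : HasDerivAt (fun t : ℝ => L / 2 * t ^ 2 * ‖v‖ ^ 2) (L * t * ‖v‖ ^ 2) t := by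
      have := ((hasDerivAt_pow 2 t).const_mul (L / 2)).mul_const (‖v‖ ^ 2)
      refine this.congr_deriv ?_
      push_cast
      ring
    exact (d1.sub d2).sub d3
  have hanti : AntitoneOn h (Icc 0 1) := by
    apply antitoneOn_of_hasDerivWithinAt_nonpos (convex_Icc 0 1)
      (fun t _ => (hd t).continuousAt.continuousWithinAt)
      (fun t _ => (hd t).hasDerivWithinAt)
    intro t ht
    rw [interior_Icc] at ht
    have ht0 : 0 ≤ t := ht.1.le
    have hcs : ⟪f' (x + t • v) - f' x, v⟫ ≤ ‖f' (x + t • v) - f' x‖ * ‖v‖ :=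
      real_inner_le_norm _ _
    have hlip : ‖f' (x + t • v) - f' x‖ ≤ L * (t * ‖v‖) := by
      have := hsmooth (x + t • v) x
      simpa [norm_smul, abs_of_nonneg ht0] using this
    have hvnn : (0:ℝ) ≤ ‖v‖ := norm_nonneg _
    have : ⟪f' (x + t • v) - f' x, v⟫ ≤ L * t * ‖v‖ ^ 2 := by
      calc ⟪f' (x + t • v) - f' x, v⟫ ≤ ‖f' (x + t • v) - f' x‖ * ‖v‖ := hcs
        _ ≤ L * (t * ‖v‖) * ‖v‖ := by nlinarith
        _ = L * t * ‖v‖ ^ 2 := by ring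
    have hexp : ⟪f' (x + t • v) - f' x, v⟫ = ⟪f' (x + t • v), v⟫ - ⟪f' x, v⟫ :=
      inner_sub_left _ _ _
    simp only [hh']
    linarith [hexp ▸ this]
  have key := hanti (Set.left_mem_Icc.2 zero_le_one) (Set.right_mem_Icc.2 zero_le_one)
    zero_le_one
  have h0 : h 0 = f x := by simp [hh]
  have h1 : h 1 = f y - ⟪f' x, v⟫ - L / 2 * ‖v‖ ^ 2 := by simp [hh, hv]
  rw [h0, h1] at key
  linarith


open Finset

set_option maxHeartbeats 800000 in
/-- One-step potential inequality for randomized block-coordinate descent on a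
smooth convex function. The `U i` are the projections onto complementary
coordinate blocks, so that they sum to the identity and Pythagoras holds. -/
theorem block_coordinate_descent_potential {d n : ℕ} (hn : 0 < n)
    (L : ℝ) (hL : 0 < L)
    (f : EuclideanSpace ℝ (Fin d) → ℝ)
    (f' : EuclideanSpace ℝ (Fin d) → EuclideanSpace ℝ (Fin d))
    (hgrad : ∀ x, HasGradientAt f (f' x) x)
    (hconv : ConvexOn ℝ Set.univ f)
    (hsmooth : ∀ x y, ‖f' x - f' y‖ ≤ L * ‖x - y‖)
    (xstar : EuclideanSpace ℝ (Fin d)) (hmin : ∀ y, f xstar ≤ f y)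
    (U : Fin n → EuclideanSpace ℝ (Fin d) →L[ℝ] EuclideanSpace ℝ (Fin d))
    (hUproj : ∀ i x, U i (U i x) = U i x)
    (hUsum : ∀ x, ∑ i, U i x = x)
    (hUpyth : ∀ x, ∑ i, ‖U i x‖ ^ 2 = ‖x‖ ^ 2)
    (δ dk : ℝ) (hδ0 : 0 ≤ δ) (hδ1 : δ ≤ 1 / L) (hdk : 1 ≤ dk)
    (xk : EuclideanSpace ℝ (Fin d))
    (x1 : Fin n → EuclideanSpace ℝ (Fin d))
    (hx1 : ∀ i, x1 i = xk - δ • U i (f' xk)) :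
    (n : ℝ)⁻¹ * (∑ i, ((dk + δ * L / (n : ℝ)) * (f (x1 i) - f xstar)
        + L / 2 * ‖x1 i - xstar‖ ^ 2))
      ≤ dk * (f xk - f xstar) + L / 2 * ‖xk - xstar‖ ^ 2 := by
  set g := f' xk with hg
  set a := f xk - f xstar with ha
  set G := ‖g‖ ^ 2 with hG
  set N := ‖xk - xstar‖ ^ 2 with hN
  set C := (inner ℝ g (xk - xstar) : ℝ) with hC
  have hn' : (1:ℝ) ≤ (n:ℝ) := by exact_mod_cast hn
  have hnpos : (0:ℝ) < (n:ℝ) := by positivity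
  have hδL : δ * L ≤ 1 := by
    rw [div_eq_mul_inv, one_mul] at hδ1
    calc δ * L ≤ L⁻¹ * L := by
          apply mul_le_mul_of_nonneg_right hδ1 hL.le
      _ = 1 := inv_mul_cancel₀ hL.ne'
  have ha0 : 0 ≤ a := by simp only [ha, sub_nonneg]; exact hmin xk
  have hG0 : 0 ≤ G := by positivity
  have hN0 : 0 ≤ N := by positivity
  -- convexity: a ≤ C
  have haC : a ≤ C := by
    have := grad_le_sub f f' hgrad hconv xk xstar
    have hflip : (inner ℝ g (xstar - xk) : ℝ) = -C := by
      rw [hC, ← inner_neg_right]; congr 1; abel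
    rw [hflip] at this
    simp only [ha]; linarith
  -- sum of inner products
  have hsum_inner : ∑ i, (inner ℝ g (U i g) : ℝ) = G := by
    rw [← inner_sum, hUsum g, hG, real_inner_self_eq_norm_sq]
  have hsum_inner2 : ∑ i, (inner ℝ (xk - xstar) (U i g) : ℝ) = C := by
    rw [← inner_sum, hUsum g, hC, real_inner_comm]
  have hsum_pyth : ∑ i, ‖U i g‖ ^ 2 = G := hUpyth g
  -- per-i smoothness bound, summed
  have hS : ∑ i, (f (x1 i) - f xstar)
      ≤ (n:ℝ) * a - δ * G + L / 2 * δ ^ 2 * G := by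
    have hstep : ∀ i, f (x1 i) - f xstar
        ≤ a - δ * (inner ℝ g (U i g) : ℝ) + L / 2 * δ ^ 2 * ‖U i g‖ ^ 2 := by
      intro i
      have := descent_lemma f f' hgrad L hsmooth xk (x1 i)
      have hdiff : x1 i - xk = -(δ • U i g) := by rw [hx1 i]; abel
      rw [hdiff] at this
      have hip : (inner ℝ g (-(δ • U i g)) : ℝ) = -(δ * (inner ℝ g (U i g) : ℝ)) := by
        rw [inner_neg_right, real_inner_smul_right]
      have hnrm : ‖-(δ • U i g)‖ ^ 2 = δ ^ 2 * ‖U i g‖ ^ 2 := by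
        rw [norm_neg, norm_smul]
        simp [mul_pow, abs_of_nonneg hδ0, sq_abs]
      rw [hip, hnrm] at this
      simp only [ha]; linarith
    calc ∑ i, (f (x1 i) - f xstar)
        ≤ ∑ i, (a - δ * (inner ℝ g (U i g) : ℝ) + L / 2 * δ ^ 2 * ‖U i g‖ ^ 2) :=
          Finset.sum_le_sum fun i _ => hstep i
      _ = (n:ℝ) * a - δ * G + L / 2 * δ ^ 2 * G := by
          rw [Finset.sum_add_distrib, Finset.sum_sub_distrib, ← Finset.mul_sum,
            ← Finset.mul_sum, hsum_inner, hsum_pyth, Finset.sum_const,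
            Finset.card_univ, Fintype.card_fin, nsmul_eq_mul]
  -- sum of squared distances
  have hB : ∑ i, ‖x1 i - xstar‖ ^ 2 = (n:ℝ) * N - 2 * δ * C + δ ^ 2 * G := by
    have hstep : ∀ i, ‖x1 i - xstar‖ ^ 2
        = N - 2 * (δ * (inner ℝ (xk - xstar) (U i g) : ℝ)) + δ ^ 2 * ‖U i g‖ ^ 2 := by
      intro i
      have hdiff : x1 i - xstar = (xk - xstar) - δ • U i g := by rw [hx1 i]; abel
      rw [hdiff, norm_sub_sq_real, real_inner_smul_right, norm_smul,
        Real.norm_eq_abs, abs_of_nonneg hδ0]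
      simp only [hN]
      ring
    rw [Finset.sum_congr rfl fun i _ => hstep i, Finset.sum_add_distrib,
      Finset.sum_sub_distrib, ← Finset.mul_sum, ← Finset.mul_sum, ← Finset.mul_sum,
      hsum_inner2, hsum_pyth, Finset.sum_const, Finset.card_univ, Fintype.card_fin,
      nsmul_eq_mul]
    ring
  -- put goal in summed form
  have hgoal : (∑ i, ((dk + δ * L / (n : ℝ)) * (f (x1 i) - f xstar)
        + L / 2 * ‖x1 i - xstar‖ ^ 2))
      = (dk + δ * L / (n:ℝ)) * (∑ i, (f (x1 i) - f xstar))
        + L / 2 * (∑ i, ‖x1 i - xstar‖ ^ 2) := by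
    rw [Finset.sum_add_distrib, ← Finset.mul_sum, ← Finset.mul_sum]
  rw [hgoal, hB, inv_mul_le_iff₀ hnpos]
  set c := dk + δ * L / (n:ℝ) with hc
  have hc1 : 1 ≤ c := by
    have h0 : 0 ≤ δ * L / (n:ℝ) := by positivity
    simp only [hc]
    linarith
  have hcn : c * (n:ℝ) = dk * (n:ℝ) + δ * L := by
    rw [hc]; field_simp
  have hmul : c * (∑ i, (f (x1 i) - f xstar))
      ≤ c * ((n:ℝ) * a - δ * G + L / 2 * δ ^ 2 * G) :=
    mul_le_mul_of_nonneg_left hS (by linarith)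
  have hexp : c * ((n:ℝ) * a - δ * G + L / 2 * δ ^ 2 * G)
      = dk * ((n:ℝ) * a) + δ * L * a - c * δ * G * (1 - L * δ / 2) := by
    linear_combination a * hcn
  have t1 : δ * L * a ≤ δ * L * C :=
    mul_le_mul_of_nonneg_left haC (by positivity)
  have t2 : L * δ ^ 2 / 2 * G ≤ c * δ * G * (1 - L * δ / 2) := by
    have h2 : L * δ / 2 ≤ 1 - L * δ / 2 := by linarith [hδL]
    have h3 : 1 - L * δ / 2 ≤ c * (1 - L * δ / 2) :=
      le_mul_of_one_le_left (by linarith [hδL]) hc1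
    calc L * δ ^ 2 / 2 * G = (δ * G) * (L * δ / 2) := by ring
      _ ≤ (δ * G) * (c * (1 - L * δ / 2)) :=
          mul_le_mul_of_nonneg_left (h2.trans h3) (mul_nonneg hδ0 hG0)
      _ = c * δ * G * (1 - L * δ / 2) := by ring
  have hLnn : 0 ≤ L := hL.le
  nlinarith [hmul, hexp, t1, t2]
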